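/- Let T ∈ {0,1}^{m×n} be a binary matrix, and define R_T ∈ {0,1}^{n×n} by (R_T)_{jk} = 0 if there exists i with T_{ik} = 0 and T_{ij} = 1, and (R_T)_{jk} = 1 otherwise; define R*_T ∈ {0,1}^{n×n} by (R*_T)_{jk} = 1 iff (R_T)_{jk} = (R_T)_{kj} = 1. Then R*_T is symmetric, R*_T ≥ I_n, the structural product satisfies T(R*_T)^{n−1} ≤ T, and (R*_T)^{n−1} = R*_T. -/

import Mathlib

open Matrix

/-- Structural product of binary (Boolean) matrices:
`(sprod X Z) i j = true` iff `∃ k, X i k = true ∧ Z k j = true`. -/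
def sprod {m n p : ℕ} (X : Matrix (Fin m) (Fin n) Bool) (Z : Matrix (Fin n) (Fin p) Bool) :
    Matrix (Fin m) (Fin p) Bool :=
  Matrix.of fun i j => decide (∃ k, X i k = true ∧ Z k j = true)

/-- Structural power of a binary matrix, with `spow R 0 = I`. -/
def spow {n : ℕ} (R : Matrix (Fin n) (Fin n) Bool) : ℕ → Matrix (Fin n) (Fin n) Bool
  | 0 => Matrix.of fun i j => decide (i = j)
  | k + 1 => sprod (spow R k) R

/-- `Y` belongs to the sparsity subspace `Sparse(X)`. -/
def InSparse {m n : ℕ} (X : Matrix (Fin m) (Fin n) Bool) (Y : Matrix (Fin m) (Fin n) ℝ) : Prop :=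
  ∀ i j, X i j = false → Y i j = 0

/-- The binary matrix encoding the sparsity pattern of a real matrix. -/
noncomputable def Struct {m n : ℕ} (Y : Matrix (Fin m) (Fin n) ℝ) : Matrix (Fin m) (Fin n) Bool :=
  Matrix.of fun i j => decide (Y i j ≠ 0)

/-- Entrywise order on binary matrices: `leB X X'` means `X ≤ X'`. -/
def leB {m n : ℕ} (X X' : Matrix (Fin m) (Fin n) Bool) : Prop :=
  ∀ i j, X i j = true → X' i j = true

/-- properties of the optimized Lyapunov sparsity `R*_T`
constructed from `T` by the two-step procedure: `R*_T` is symmetric,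
`R*_T ≥ Iₙ`, `T (R*_T)^{n-1} ≤ T`, and `(R*_T)^{n-1} = R*_T`. -/
theorem optimized_sparsity_properties {m n : ℕ}
    (T : Matrix (Fin m) (Fin n) Bool)
    (RT Rstar : Matrix (Fin n) (Fin n) Bool)
    (hRT : ∀ j k, RT j k = false ↔ ∃ i, T i k = false ∧ T i j = true)
    (hRstar : ∀ j k, Rstar j k = true ↔ (RT j k = true ∧ RT k j = true)) :
    (∀ j k, Rstar j k = Rstar k j) ∧
    (∀ j, Rstar j j = true) ∧
    leB (sprod T (spow Rstar (n - 1))) T ∧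
    spow Rstar (n - 1) = Rstar := by

  have hR : ∀ j k, RT j k = true ↔ ∀ i, T i j = true → T i k = true := by
    intro j k
    cases h : RT j k with
    | false =>
      simp only [Bool.false_eq_true, false_iff]
      obtain ⟨i, hik, hij⟩ := (hRT j k).mp h
      intro hall
      rw [hall i hij] at hik
      exact absurd hik (by simp)
    | true =>
      simp only [true_iff]
      intro i hij
      by_contra hik
      have : RT j k = false := (hRT j k).mpr ⟨i, by simpa using hik, hij⟩
      simp [h] at this
  have hS : ∀ j k, Rstar j k = true ↔ ∀ i, (T i j = true ↔ T i k = true) := by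
    intro j k
    rw [hRstar, hR, hR]
    constructor
    · rintro ⟨a, b⟩ i; exact ⟨a i, b i⟩
    · intro h; exact ⟨fun i => (h i).mp, fun i => (h i).mpr⟩
  have hrefl : ∀ j, Rstar j j = true := fun j => (hS j j).mpr fun i => Iff.rfl
  have hsym : ∀ j k, Rstar j k = Rstar k j := by
    intro j k
    apply Bool.eq_iff_iff.mpr
    rw [hS, hS]
    constructor <;> intro h i <;> exact (h i).symm
  have htrans : ∀ j k l, Rstar j k = true → Rstar k l = true → Rstar j l = true := by
    intro j k l h1 h2
    rw [hS] at *
    intro i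
    exact (h1 i).trans (h2 i)
  have hle : ∀ p, leB (sprod T (spow Rstar p)) T := by
    intro p
    induction p with
    | zero =>
      intro i j h
      simp only [sprod, spow, Matrix.of_apply, decide_eq_true_eq] at h
      obtain ⟨k, hk, heq⟩ := h
      rwa [← heq]
    | succ p ih =>
      intro i j h
      rw [show spow Rstar (p + 1) = sprod (spow Rstar p) Rstar from rfl] at h
      simp only [sprod, spow, Matrix.of_apply, decide_eq_true_eq] at h
      obtain ⟨k, hk, hkj⟩ := of_decide_eq_true (p := ∃ k, T i k = true ∧ sprod (spow Rstar p) Rstar k j = true) h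
      obtain ⟨l, hl, hlj⟩ := of_decide_eq_true (p := ∃ l, spow Rstar p k l = true ∧ Rstar l j = true) hkj
      have hT : T i l = true := by
        apply ih
        simp only [sprod, Matrix.of_apply, decide_eq_true_eq]
        exact ⟨k, hk, hl⟩
      exact (hR l j).mp ((hRstar l j).mp hlj).1 i hT
  have hsq : sprod Rstar Rstar = Rstar := by
    ext j l
    apply Bool.eq_iff_iff.mpr
    simp only [sprod, Matrix.of_apply, decide_eq_true_eq]
    constructor
    · rintro ⟨k, h1, h2⟩; exact htrans j k l h1 h2
    · intro h; exact ⟨j, hrefl j, h⟩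
  have hpow : ∀ p, spow Rstar (p + 1) = Rstar := by
    intro p
    induction p with
    | zero =>
      ext j l
      apply Bool.eq_iff_iff.mpr
      simp only [spow, sprod, Matrix.of_apply, decide_eq_true_eq]
      constructor
      · rintro ⟨k, rfl, h⟩; exact h
      · intro h; exact ⟨j, rfl, h⟩
    | succ p ih =>
      show sprod (spow Rstar (p + 1)) Rstar = Rstar
      rw [ih, hsq]
  refine ⟨hsym, hrefl, hle _, ?_⟩
  clear hS htrans hsq hsym hle hR hRT hRstar RT T
  match n, Rstar, hrefl, hpow with
  | 0, Rstar, hrefl, hpow => ext j k; exact j.elim0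
  | 1, Rstar, hrefl, hpow =>
    ext j k
    have hjk : j = k := Subsingleton.elim j k
    subst hjk
    show decide (j = j) = Rstar j j
    simp [hrefl j]
  | (n + 2), Rstar, hrefl, hpow => exact hpow n
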